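/- For every real constant α ≥ 1 there exist a constant c > 0 and an integer N such that for all n ≥ N the following holds. If A is a non-adaptive randomized group-testing algorithm on item set Fin n making s tests such that for every defective set I ⊆ Fin n, with probability at least 2/3 over A, the output D satisfies |I| ≤ D ≤ α·|I|, then s ≥ c · (log₂ n) / (480 · log* n)^{(log* n) + 1}. -/

import Mathlib

open scoped ENNReal

/-- Iterated binary logarithm: `iterLog 0 x = x`, `iterLog (k+1) x = log₂ (iterLog k x)`. -/
noncomputable def iterLog : ℕ → ℝ → ℝ
  | 0, x => x
  | k + 1, x => Real.logb 2 (iterLog k x)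

/-- `logStar n` is the least `k` with `log^{[k]} n < 2`. -/
noncomputable def logStar (n : ℕ) : ℕ := sInf {k : ℕ | iterLog k (n : ℝ) < 2}

/-- A non-adaptive randomized group-testing algorithm on `Fin n` making `s` tests:
a PMF over pairs (tests, estimator). -/
abbrev Alg (n s : ℕ) : Type := PMF ((Fin s → Finset (Fin n)) × ((Fin s → Bool) → ℕ))

/-- The answer vector of the tests `Q` on the defective set `I`. -/
def answers {n s : ℕ} (Q : Fin s → Finset (Fin n)) (I : Finset (Fin n)) : Fin s → Bool :=
  fun i => decide ((Q i ∩ I).Nonempty)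

/-- The probability, over the algorithm `A`, that the output `D` satisfies
`|I| ≤ D ≤ α·|I|` on the defective set `I`. -/
noncomputable def estProb {n s : ℕ} (A : Alg n s) (α : ℝ) (I : Finset (Fin n)) : ℝ≥0∞ :=
  A.toOuterMeasure
    {p | (I.card : ℝ) ≤ (p.2 (answers p.1 I) : ℝ) ∧ (p.2 (answers p.1 I) : ℝ) ≤ α * I.card}


namespace GTLB

open Finset

/-! ### analytic lemmas -/

lemma geom_inv_sum_le {β : ℝ} (hβ : 2 ≤ β) (T : ℕ) :
    ∑ k ∈ Finset.range T, (β⁻¹) ^ k ≤ 2 := by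
  have hβ0 : (0:ℝ) < β := by linarith
  have hx0 : 0 < β⁻¹ := by positivity
  have hx : β⁻¹ ≤ 1/2 := by
    rw [inv_le_comm₀ (by linarith) (by norm_num)]; linarith
  have h1 : β⁻¹ ≠ 1 := by
    intro h; rw [h] at hx; norm_num at hx
  rw [geom_sum_eq h1]
  rw [div_le_iff_of_neg (by linarith [hx] : β⁻¹ - 1 < 0)]
  have hp : (0:ℝ) ≤ β⁻¹ ^ T := by positivity
  nlinarith

lemma sum_le_of_all_lt_one {β x : ℝ} (hβ : 2 ≤ β) (hx : 0 ≤ x) (T : ℕ)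
    (h : ∀ j < T, x * β ^ j < 1) : ∑ j ∈ Finset.range T, x * β ^ j ≤ 2 := by
  rcases Nat.eq_zero_or_pos T with rfl | hT
  · simp
  have hβ0 : (0:ℝ) < β := by linarith
  rw [← Finset.sum_range_reflect]
  have key : ∀ j ∈ Finset.range T, x * β ^ (T - 1 - j) ≤ (x * β ^ (T-1)) * (β⁻¹)^j := by
    intro j hj
    rw [Finset.mem_range] at hj
    have hjle : j ≤ T - 1 := by omega
    have : β ^ (T - 1 - j) = β ^ (T-1) / β ^ j := by
      rw [pow_sub₀ _ (ne_of_gt hβ0) hjle]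
      rw [div_eq_mul_inv]
    rw [this, inv_pow]
    rw [div_eq_mul_inv, mul_assoc]
  calc ∑ j ∈ Finset.range T, x * β ^ (T - 1 - j)
      ≤ ∑ j ∈ Finset.range T, (x * β ^ (T-1)) * (β⁻¹)^j := Finset.sum_le_sum key
    _ = (x * β ^ (T-1)) * ∑ j ∈ Finset.range T, (β⁻¹)^j := by rw [Finset.mul_sum]
    _ ≤ 1 * 2 := by
        apply mul_le_mul (le_of_lt (h (T-1) (by omega))) (geom_inv_sum_le hβ T)
          (Finset.sum_nonneg fun i _ => by positivity) zero_le_one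
    _ = 2 := by ring

lemma sum_min_le {β x : ℝ} (hβ : 2 ≤ β) (hx : 0 < x) (T : ℕ) :
    ∑ j ∈ Finset.range T, min (x * β ^ j) (x * β ^ j)⁻¹ ≤ 4 := by
  have hβ0 : (0:ℝ) < β := by linarith
  by_cases h : ∀ j < T, x * β ^ j < 1
  · calc ∑ j ∈ Finset.range T, min (x * β ^ j) (x * β ^ j)⁻¹
        ≤ ∑ j ∈ Finset.range T, x * β ^ j := Finset.sum_le_sum fun i _ => min_le_left _ _
      _ ≤ 2 := sum_le_of_all_lt_one hβ hx.le T h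
      _ ≤ 4 := by norm_num
  · push_neg at h
    obtain ⟨j1, hj1T, hj1⟩ := h
    have hex : ∃ k, 1 ≤ x * β ^ k := ⟨j1, hj1⟩
    classical
    have hj0 : 1 ≤ x * β ^ (Nat.find hex) := Nat.find_spec hex
    set j0 := Nat.find hex with hj0def
    have hmin : ∀ k < j0, x * β ^ k < 1 := fun k hk => not_le.mp (Nat.find_min hex hk)
    have hj0T : j0 ≤ T := le_trans (Nat.find_le hj1) hj1T.le
    rw [Finset.range_eq_Ico, ← Finset.sum_Ico_consecutive _ (Nat.zero_le j0) hj0T]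
    have h1 : ∑ j ∈ Finset.Ico 0 j0, min (x * β ^ j) (x * β ^ j)⁻¹ ≤ 2 := by
      rw [← Finset.range_eq_Ico]
      calc ∑ j ∈ Finset.range j0, min (x * β ^ j) (x * β ^ j)⁻¹
          ≤ ∑ j ∈ Finset.range j0, x * β ^ j := Finset.sum_le_sum fun i _ => min_le_left _ _
        _ ≤ 2 := sum_le_of_all_lt_one hβ hx.le j0 hmin
    have h2 : ∑ j ∈ Finset.Ico j0 T, min (x * β ^ j) (x * β ^ j)⁻¹ ≤ 2 := by
      calc ∑ j ∈ Finset.Ico j0 T, min (x * β ^ j) (x * β ^ j)⁻¹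
          ≤ ∑ j ∈ Finset.Ico j0 T, (x * β ^ j)⁻¹ := Finset.sum_le_sum fun i _ => min_le_right _ _
        _ = ∑ k ∈ Finset.range (T - j0), (x * β ^ (j0 + k))⁻¹ := by
            rw [Finset.sum_Ico_eq_sum_range]
        _ ≤ ∑ k ∈ Finset.range (T - j0), (β⁻¹)^k := by
            apply Finset.sum_le_sum
            intro k _
            rw [inv_pow]
            apply inv_anti₀ (by positivity)
            calc (β:ℝ) ^ k = 1 * β ^ k := (one_mul _).symm
              _ ≤ (x * β ^ j0) * β ^ k := by
                  apply mul_le_mul_of_nonneg_right hj0 (by positivity)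
              _ = x * β ^ (j0 + k) := by rw [pow_add]; ring
        _ ≤ 2 := geom_inv_sum_le hβ _
    linarith

lemma pow_one_sub_mul_le {x : ℝ} (hx0 : 0 < x) (hx1 : x ≤ 1) {m : ℕ} (hm : 1 ≤ m) :
    (1 - x) ^ m * ((m:ℝ) * x) ≤ 1 := by
  rcases eq_or_lt_of_le hx1 with rfl | hlt
  · rw [sub_self, zero_pow (by omega)]; norm_num
  · have h1x : 0 < 1 - x := by linarith
    set y := x / (1 - x) with hy
    have hy0 : 0 ≤ y := by positivity
    have hxy : x ≤ y := by
      rw [hy, le_div_iff₀ h1x]; nlinarith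
    have hb : 1 + (m:ℝ) * y ≤ (1 + y) ^ m := one_add_mul_le_pow (by linarith) m
    have hprod : (1 - x) * (1 + y) = 1 := by
      rw [hy]; field_simp; ring
    have hm0 : (0:ℝ) ≤ (m:ℝ) := Nat.cast_nonneg m
    calc (1 - x) ^ m * ((m:ℝ) * x) ≤ (1 - x) ^ m * (1 + (m:ℝ) * y) := by
          apply mul_le_mul_of_nonneg_left _ (by positivity)
          nlinarith
      _ ≤ (1 - x) ^ m * (1 + y) ^ m := by
          apply mul_le_mul_of_nonneg_left hb (by positivity)
      _ = ((1 - x) * (1 + y)) ^ m := (mul_pow _ _ _).symm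
      _ = 1 := by rw [hprod, one_pow]

lemma choose_mul_pow_le (n q : ℕ) (hq : q ≤ n) : ∀ m : ℕ,
    ((n - q).choose m : ℝ) * (n:ℝ) ^ m ≤ (n.choose m : ℝ) * (((n - q : ℕ)) : ℝ) ^ m := by
  intro m
  induction m with
  | zero => simp
  | succ m ih =>
    rcases le_or_gt (n - q) m with hm | hm
    · have h0 : (n - q).choose (m+1) = 0 := Nat.choose_eq_zero_of_lt (by omega)
      rw [h0]
      push_cast
      have : (0:ℝ) ≤ (n.choose (m+1) : ℝ) * ((n - q : ℕ) : ℝ) ^ (m+1) := by positivity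
      simpa using this
    · have hmn : m < n := by omega
      have key1 : ((n-q).choose (m+1) : ℝ) * ((m:ℝ)+1) = ((n-q).choose m : ℝ) * (((n-q:ℕ):ℝ) - m) := by
        have h := Nat.choose_succ_right_eq (n-q) m
        have hcast := congrArg (Nat.cast : ℕ → ℝ) h
        rw [Nat.cast_mul, Nat.cast_mul, Nat.cast_sub hm.le] at hcast
        exact_mod_cast hcast
      have key2 : (n.choose (m+1) : ℝ) * ((m:ℝ)+1) = (n.choose m : ℝ) * ((n:ℝ) - m) := by
        have h := Nat.choose_succ_right_eq n m
        have hcast := congrArg (Nat.cast : ℕ → ℝ) h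
        rw [Nat.cast_mul, Nat.cast_mul, Nat.cast_sub hmn.le] at hcast
        exact_mod_cast hcast
      have hr : ((n - q : ℕ) : ℝ) ≤ (n:ℝ) := by exact_mod_cast Nat.sub_le n q
      have hrm : (m:ℝ) < ((n-q:ℕ):ℝ) := by exact_mod_cast hm
      have hn0 : (0:ℝ) ≤ (n:ℝ) := Nat.cast_nonneg n
      have hCn : (0:ℝ) ≤ (n.choose m : ℝ) := Nat.cast_nonneg _
      have hCq : (0:ℝ) ≤ ((n-q).choose m : ℝ) := Nat.cast_nonneg _
      have hrpow : (0:ℝ) ≤ ((n-q:ℕ):ℝ) ^ m := by positivity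
      have hnpow : (0:ℝ) ≤ (n:ℝ) ^ m := by positivity
      have hmain : ((n-q).choose (m+1) : ℝ) * (n:ℝ)^(m+1) * ((m:ℝ)+1)
          ≤ (n.choose (m+1) : ℝ) * ((n-q:ℕ):ℝ)^(m+1) * ((m:ℝ)+1) := by
        have e1 : ((n-q).choose (m+1) : ℝ) * (n:ℝ)^(m+1) * ((m:ℝ)+1)
            = (((n-q).choose m : ℝ) * (n:ℝ)^m) * ((((n-q):ℕ):ℝ) - m) * n := by
          rw [pow_succ]
          linear_combination ((n:ℝ)^m * n) * key1
        have e2 : (n.choose (m+1) : ℝ) * ((n-q:ℕ):ℝ)^(m+1) * ((m:ℝ)+1)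
            = ((n.choose m : ℝ) * ((n-q:ℕ):ℝ)^m) * (((n:ℝ)) - m) * ((n-q:ℕ):ℝ) := by
          rw [pow_succ]
          linear_combination (((n-q:ℕ):ℝ)^m * ((n-q:ℕ):ℝ)) * key2
        rw [e1, e2]
        have step1 : (((n-q).choose m : ℝ) * (n:ℝ)^m) * ((((n-q):ℕ):ℝ) - m) * n
            ≤ ((n.choose m : ℝ) * ((n-q:ℕ):ℝ)^m) * ((((n-q):ℕ):ℝ) - m) * n := by
          apply mul_le_mul_of_nonneg_right _ hn0
          apply mul_le_mul_of_nonneg_right ih (by linarith)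
        have step2 : ((n.choose m : ℝ) * ((n-q:ℕ):ℝ)^m) * ((((n-q):ℕ):ℝ) - m) * n
            ≤ ((n.choose m : ℝ) * ((n-q:ℕ):ℝ)^m) * (((n:ℝ)) - m) * ((n-q:ℕ):ℝ) := by
          have hA : (0:ℝ) ≤ (n.choose m : ℝ) * ((n-q:ℕ):ℝ)^m := by positivity
          nlinarith [mul_nonneg hA (mul_nonneg (Nat.cast_nonneg m) (sub_nonneg.mpr hr))]
        linarith
      have hpos : (0:ℝ) < (m:ℝ)+1 := by positivity
      calc ((n-q).choose (m+1) : ℝ) * (n:ℝ)^(m+1)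
          = (((n-q).choose (m+1) : ℝ) * (n:ℝ)^(m+1) * ((m:ℝ)+1)) / ((m:ℝ)+1) := by
            field_simp
        _ ≤ ((n.choose (m+1) : ℝ) * ((n-q:ℕ):ℝ)^(m+1) * ((m:ℝ)+1)) / ((m:ℝ)+1) := by
            gcongr
        _ = (n.choose (m+1) : ℝ) * ((n-q:ℕ):ℝ)^(m+1) := by field_simp


lemma choose_div_le (n q m : ℕ) (hq1 : 1 ≤ q) (hqn : q ≤ n) (hm : 1 ≤ m) (hmn : m ≤ n) :
    ((n - q).choose m : ℝ) / (n.choose m : ℝ) ≤ (n:ℝ) / ((m:ℝ) * q) := by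
  have hc : (0:ℝ) < (n.choose m : ℝ) := by exact_mod_cast Nat.choose_pos hmn
  have hn0 : (0:ℝ) < n := by exact_mod_cast (by omega : 0 < n)
  have hmq : (0:ℝ) < (m:ℝ) * q := by
    have h1 : (0:ℝ) < (m:ℝ) := by exact_mod_cast hm
    have h2 : (0:ℝ) < (q:ℝ) := by exact_mod_cast hq1
    positivity
  rw [div_le_div_iff₀ hc hmq]
  have hx0 : 0 < (q:ℝ)/n := by
    have : (0:ℝ) < (q:ℝ) := by exact_mod_cast hq1
    positivity
  have hx1 : (q:ℝ)/n ≤ 1 := by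
    rw [div_le_one hn0]; exact_mod_cast hqn
  have hB := pow_one_sub_mul_le hx0 hx1 hm
  have hpow := choose_mul_pow_le n q hqn m
  have h1mx : ((n - q : ℕ):ℝ) = (1 - (q:ℝ)/n) * n := by
    rw [Nat.cast_sub hqn]; field_simp
  have hnm : (0:ℝ) < (n:ℝ)^m := by positivity
  rw [← mul_le_mul_iff_of_pos_right hnm]
  calc ((n-q).choose m : ℝ) * ((m:ℝ)*q) * (n:ℝ)^m
      = (((n-q).choose m : ℝ) * (n:ℝ)^m) * ((m:ℝ)*q) := by ring
    _ ≤ ((n.choose m : ℝ) * ((n-q:ℕ):ℝ)^m) * ((m:ℝ)*q) :=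
        mul_le_mul_of_nonneg_right hpow (by positivity)
    _ = (n.choose m : ℝ) * (n:ℝ)^m * ((1 - (q:ℝ)/n)^m * ((m:ℝ) * ((q:ℝ)/n))) * n := by
        rw [h1mx, mul_pow]
        field_simp
    _ ≤ (n.choose m : ℝ) * (n:ℝ)^m * 1 * n := by
        have hnonneg : (0:ℝ) ≤ (n.choose m : ℝ) * (n:ℝ)^m := by positivity
        have := mul_le_mul_of_nonneg_left hB hnonneg
        nlinarith
    _ = (n:ℝ) * (n.choose m : ℝ) * (n:ℝ)^m := by ring


def pairsF (n m m' : ℕ) : Finset (Finset (Fin n) × Finset (Fin n)) :=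
  Finset.univ.filter fun pr => pr.1 ⊆ pr.2 ∧ pr.1.card = m ∧ pr.2.card = m'

lemma mem_pairsF {n m m' : ℕ} {pr : Finset (Fin n) × Finset (Fin n)} :
    pr ∈ pairsF n m m' ↔ pr.1 ⊆ pr.2 ∧ pr.1.card = m ∧ pr.2.card = m' := by
  simp [pairsF]

lemma card_supersets {n : ℕ} (I : Finset (Fin n)) (m' : ℕ) (hm' : I.card ≤ m') :
    (((Finset.univ : Finset (Fin n)).powersetCard m').filter fun I' => I ⊆ I').card
      = (n - I.card).choose (m' - I.card) := by
  classical
  have hcompl : (Iᶜ : Finset (Fin n)).card = n - I.card := by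
    rw [Finset.card_compl, Fintype.card_fin]
  rw [← hcompl, ← Finset.card_powersetCard (m' - I.card) Iᶜ]
  refine Finset.card_bij' (fun I' _ => I' \ I) (fun K _ => K ∪ I) ?_ ?_ ?_ ?_
  · intro I' hI'
    rw [Finset.mem_filter, Finset.mem_powersetCard] at hI'
    obtain ⟨⟨-, hcard⟩, hsub⟩ := hI'
    rw [Finset.mem_powersetCard]
    constructor
    · intro x hx
      rw [Finset.mem_sdiff] at hx
      rw [Finset.mem_compl]
      exact hx.2
    · rw [Finset.card_sdiff_of_subset hsub, hcard]
  · intro K hK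
    rw [Finset.mem_powersetCard] at hK
    obtain ⟨hKsub, hKcard⟩ := hK
    have hdisj : Disjoint K I := by
      rw [Finset.disjoint_left]
      intro a haK haI
      have := hKsub haK
      rw [Finset.mem_compl] at this
      exact this haI
    rw [Finset.mem_filter, Finset.mem_powersetCard]
    refine ⟨⟨Finset.subset_univ _, ?_⟩, Finset.subset_union_right⟩
    rw [Finset.card_union_of_disjoint hdisj, hKcard]
    omega
  · intro I' hI'
    rw [Finset.mem_filter] at hI'
    exact Finset.sdiff_union_of_subset hI'.2
  · intro K hK
    rw [Finset.mem_powersetCard] at hK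
    have hdisj : Disjoint K I := by
      rw [Finset.disjoint_left]
      intro a haK haI
      have := hK.1 haK
      rw [Finset.mem_compl] at this
      exact this haI
    show (K ∪ I) \ I = K
    rw [Finset.union_sdiff_right, Finset.sdiff_eq_self_iff_disjoint.mpr hdisj]

lemma fib_snd {n : ℕ} (m m' : ℕ) (pred : Finset (Fin n) → Prop) [DecidablePred pred] :
    ((pairsF n m m').filter fun pr => pred pr.2).card
      = (((Finset.univ : Finset (Fin n)).powersetCard m').filter pred).card * m'.choose m := by
  classical
  rw [Finset.card_eq_sum_card_fiberwise
    (f := Prod.snd) (t := ((Finset.univ : Finset (Fin n)).powersetCard m').filter pred) ?_]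
  · have hfib : ∀ I' ∈ ((Finset.univ : Finset (Fin n)).powersetCard m').filter pred,
        (((pairsF n m m').filter fun pr => pred pr.2).filter fun pr => pr.snd = I').card
          = m'.choose m := by
      intro I' hI'
      rw [Finset.mem_filter, Finset.mem_powersetCard] at hI'
      obtain ⟨⟨-, hcard⟩, hpred⟩ := hI'
      rw [← hcard, ← Finset.card_powersetCard m I']
      refine Finset.card_bij' (fun pr _ => pr.1) (fun J _ => (J, I')) ?_ ?_ ?_ ?_
      · intro pr hpr
        rw [Finset.mem_filter, Finset.mem_filter, mem_pairsF] at hpr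
        obtain ⟨⟨⟨hsub, hc1, hc2⟩, -⟩, heq⟩ := hpr
        rw [Finset.mem_powersetCard]
        exact ⟨heq ▸ hsub, hc1⟩
      · intro J hJ
        rw [Finset.mem_powersetCard] at hJ
        rw [Finset.mem_filter, Finset.mem_filter, mem_pairsF]
        exact ⟨⟨⟨hJ.1, hJ.2, rfl⟩, hpred⟩, rfl⟩
      · intro pr hpr
        rw [Finset.mem_filter] at hpr
        exact Prod.ext rfl hpr.2.symm
      · intro J hJ
        rfl
    rw [Finset.sum_congr rfl hfib, Finset.sum_const, smul_eq_mul]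
  · intro pr hpr
    rw [Finset.mem_coe, Finset.mem_filter, mem_pairsF] at hpr
    obtain ⟨⟨hsub, hc1, hc2⟩, hpred⟩ := hpr
    rw [Finset.mem_coe, Finset.mem_filter, Finset.mem_powersetCard]
    exact ⟨⟨Finset.subset_univ _, hc2⟩, hpred⟩

lemma fib_fst {n : ℕ} (m m' : ℕ) (hmm' : m ≤ m') (pred : Finset (Fin n) → Prop)
    [DecidablePred pred] :
    ((pairsF n m m').filter fun pr => pred pr.1).card
      = (((Finset.univ : Finset (Fin n)).powersetCard m).filter pred).card
          * (n - m).choose (m' - m) := by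
  classical
  rw [Finset.card_eq_sum_card_fiberwise
    (f := Prod.fst) (t := ((Finset.univ : Finset (Fin n)).powersetCard m).filter pred) ?_]
  · have hfib : ∀ I ∈ ((Finset.univ : Finset (Fin n)).powersetCard m).filter pred,
        (((pairsF n m m').filter fun pr => pred pr.1).filter fun pr => pr.fst = I).card
          = (n - m).choose (m' - m) := by
      intro I hI
      rw [Finset.mem_filter, Finset.mem_powersetCard] at hI
      obtain ⟨⟨-, hcard⟩, hpred⟩ := hI
      rw [← hcard, ← card_supersets I m' (hcard ▸ hmm')]
      refine Finset.card_bij' (fun pr _ => pr.2) (fun I' _ => (I, I')) ?_ ?_ ?_ ?_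
      · intro pr hpr
        rw [Finset.mem_filter, Finset.mem_filter, mem_pairsF] at hpr
        obtain ⟨⟨⟨hsub, hc1, hc2⟩, -⟩, heq⟩ := hpr
        rw [Finset.mem_filter, Finset.mem_powersetCard]
        exact ⟨⟨Finset.subset_univ _, hc2⟩, heq ▸ hsub⟩
      · intro I' hI'
        rw [Finset.mem_filter, Finset.mem_powersetCard] at hI'
        rw [Finset.mem_filter, Finset.mem_filter, mem_pairsF]
        exact ⟨⟨⟨hI'.2, rfl, hI'.1.2⟩, hpred⟩, rfl⟩
      · intro pr hpr
        rw [Finset.mem_filter] at hpr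
        exact Prod.ext hpr.2.symm rfl
      · intro I' hI'
        rfl
    rw [Finset.sum_congr rfl hfib, Finset.sum_const, smul_eq_mul]
  · intro pr hpr
    rw [Finset.mem_coe, Finset.mem_filter, mem_pairsF] at hpr
    obtain ⟨⟨hsub, hc1, hc2⟩, hpred⟩ := hpr
    rw [Finset.mem_coe, Finset.mem_filter, Finset.mem_powersetCard]
    exact ⟨⟨Finset.subset_univ _, hc1⟩, hpred⟩

lemma card_pairsF_A {n m m' : ℕ} :
    (pairsF n m m').card = n.choose m' * m'.choose m := by
  classical
  have h := fib_snd (n := n) m m' (fun _ => True)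
  simpa [Finset.filter_true_of_mem, Finset.card_powersetCard] using h

lemma card_pairsF_B {n m m' : ℕ} (hmm' : m ≤ m') :
    (pairsF n m m').card = n.choose m * (n - m).choose (m' - m) := by
  classical
  have h := fib_fst (n := n) m m' hmm' (fun _ => True)
  simpa [Finset.filter_true_of_mem, Finset.card_powersetCard] using h

lemma card_pairsF_mem {n m m' : ℕ} (hm' : 1 ≤ m') (v : Fin n) :
    ((pairsF n m m').filter fun pr => v ∈ pr.2).card
      = (n - 1).choose (m' - 1) * m'.choose m := by
  classical
  have h := fib_snd (n := n) m m' (fun I' => v ∈ I')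
  rw [h]
  congr 1
  have : (((Finset.univ : Finset (Fin n)).powersetCard m').filter fun I' => v ∈ I')
      = (((Finset.univ : Finset (Fin n)).powersetCard m').filter fun I' => ({v} : Finset (Fin n)) ⊆ I') := by
    apply Finset.filter_congr
    intro I' _
    simp [Finset.singleton_subset_iff]
  rw [this, card_supersets ({v} : Finset (Fin n)) m' (by simpa using hm')]
  simp

lemma card_pairsF_avoid {n m m' : ℕ} (hmm' : m ≤ m') (Q : Finset (Fin n)) :
    ((pairsF n m m').filter fun pr => pr.1 ∩ Q = ∅).card
      = (n - Q.card).choose m * (n - m).choose (m' - m) := by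
  classical
  have h := fib_fst (n := n) m m' hmm' (fun I => I ∩ Q = ∅)
  rw [h]
  congr 1
  have : (((Finset.univ : Finset (Fin n)).powersetCard m).filter fun I => I ∩ Q = ∅)
      = Qᶜ.powersetCard m := by
    ext J
    rw [Finset.mem_filter, Finset.mem_powersetCard, Finset.mem_powersetCard]
    constructor
    · rintro ⟨⟨-, hcard⟩, hempty⟩
      refine ⟨?_, hcard⟩
      intro x hxJ
      rw [Finset.mem_compl]
      intro hxQ
      have : x ∈ J ∩ Q := Finset.mem_inter.mpr ⟨hxJ, hxQ⟩
      rw [hempty] at this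
      exact absurd this (Finset.notMem_empty x)
    · rintro ⟨hsub, hcard⟩
      refine ⟨⟨Finset.subset_univ _, hcard⟩, ?_⟩
      rw [Finset.eq_empty_iff_forall_notMem]
      intro x hx
      rw [Finset.mem_inter] at hx
      have := hsub hx.1
      rw [Finset.mem_compl] at this
      exact this hx.2
  rw [this, Finset.card_powersetCard, Finset.card_compl, Fintype.card_fin]


abbrev AlgPt (n s : ℕ) := (Fin s → Finset (Fin n)) × ((Fin s → Bool) → ℕ)

def cnt {n s : ℕ} (m m' : ℕ) (p : AlgPt n s) : ℕ :=
  ((pairsF n m m').filter fun pr => answers p.1 pr.1 ≠ answers p.1 pr.2).card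

lemma step_scale {n s : ℕ} (α : ℝ) (A : Alg n s)
    (hA : ∀ I : Finset (Fin n), (2/3 : ℝ≥0∞) ≤ estProb A α I)
    (m m' : ℕ) (hd : α * (m:ℝ) < (m':ℝ)) (hP : (pairsF n m m').card ≠ 0) :
    (1/3 : ℝ≥0∞) ≤ ∑' p : AlgPt n s,
      A p * ((cnt m m' p : ℝ≥0∞) / ((pairsF n m m').card : ℝ≥0∞)) := by
  classical
  have hpair : ∀ pr ∈ pairsF n m m', (1/3 : ℝ≥0∞)
      ≤ ∑' p : AlgPt n s, A p * (if answers p.1 pr.1 = answers p.1 pr.2 then 0 else 1) := by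
    intro pr hpr
    rw [mem_pairsF] at hpr
    obtain ⟨hsub, hc1, hc2⟩ := hpr
    have h1 := hA pr.1
    have h2 := hA pr.2
    rw [estProb, PMF.toOuterMeasure_apply] at h1 h2
    have key : ∀ p : AlgPt n s,
        Set.indicator {p : AlgPt n s | (pr.1.card : ℝ) ≤ (p.2 (answers p.1 pr.1) : ℝ) ∧
            (p.2 (answers p.1 pr.1) : ℝ) ≤ α * pr.1.card} (⇑A) p
        + Set.indicator {p : AlgPt n s | (pr.2.card : ℝ) ≤ (p.2 (answers p.1 pr.2) : ℝ) ∧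
            (p.2 (answers p.1 pr.2) : ℝ) ≤ α * pr.2.card} (⇑A) p
        ≤ A p * (if answers p.1 pr.1 = answers p.1 pr.2 then 0 else 1) + A p := by
      intro p
      by_cases he : answers p.1 pr.1 = answers p.1 pr.2
      · rw [if_pos he, mul_zero, zero_add]
        rw [Set.indicator_apply, Set.indicator_apply]
        split_ifs with hp1 hp2
        · exfalso
          obtain ⟨ha1, ha2⟩ := hp1
          obtain ⟨hb1, hb2⟩ := hp2
          rw [he] at ha2
          have hlt : α * (pr.1.card : ℝ) < (pr.2.card : ℝ) := by
            rw [hc1, hc2]; exact hd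
          have : (pr.2.card : ℝ) < (pr.2.card : ℝ) :=
            lt_of_le_of_lt (le_trans hb1 ha2) hlt
          exact lt_irrefl _ this
        · simp
        · simp
        · simp
      · rw [if_neg he, mul_one]
        refine add_le_add ?_ ?_ <;>
          · rw [Set.indicator_apply]; split_ifs <;> simp
    have h3 : (2/3 : ℝ≥0∞) + 2/3
        ≤ (∑' p : AlgPt n s, A p * (if answers p.1 pr.1 = answers p.1 pr.2 then 0 else 1)) + 1 := by
      calc (2/3 : ℝ≥0∞) + 2/3 ≤ _ + _ := add_le_add h1 h2
        _ = ∑' p : AlgPt n s, (Set.indicator _ (⇑A) p + Set.indicator _ (⇑A) p) :=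
            ENNReal.tsum_add.symm
        _ ≤ ∑' p : AlgPt n s,
            (A p * (if answers p.1 pr.1 = answers p.1 pr.2 then 0 else 1) + A p) :=
            ENNReal.tsum_le_tsum key
        _ = (∑' p : AlgPt n s, A p * (if answers p.1 pr.1 = answers p.1 pr.2 then 0 else 1))
              + ∑' p : AlgPt n s, A p := ENNReal.tsum_add
        _ = _ + 1 := by rw [A.tsum_coe]
    have h43 : (2/3 : ℝ≥0∞) + 2/3 = 1/3 + 1 := by
      have h33 : (3:ℝ≥0∞)/3 = 1 := ENNReal.div_self (by norm_num) (by norm_num)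
      calc (2/3:ℝ≥0∞) + 2/3 = (2+2)/3 := by rw [ENNReal.div_add_div_same]
        _ = (1+3)/3 := by norm_num
        _ = 1/3 + 3/3 := (ENNReal.div_add_div_same).symm
        _ = 1/3 + 1 := by rw [h33]
    rw [h43] at h3
    exact (ENNReal.add_le_add_iff_right ENNReal.one_ne_top).mp h3
  have hsum : ((pairsF n m m').card : ℝ≥0∞) * (1/3)
      ≤ ∑' p : AlgPt n s, A p * (cnt m m' p : ℝ≥0∞) := by
    calc ((pairsF n m m').card : ℝ≥0∞) * (1/3)
        = ∑ _pr ∈ pairsF n m m', (1/3 : ℝ≥0∞) := by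
          rw [Finset.sum_const, nsmul_eq_mul]
      _ ≤ ∑ pr ∈ pairsF n m m', ∑' p : AlgPt n s,
            A p * (if answers p.1 pr.1 = answers p.1 pr.2 then 0 else 1) :=
          Finset.sum_le_sum hpair
      _ = ∑' p : AlgPt n s, ∑ pr ∈ pairsF n m m',
            A p * (if answers p.1 pr.1 = answers p.1 pr.2 then 0 else 1) :=
          (Summable.tsum_finsetSum fun _ _ => ENNReal.summable).symm
      _ = ∑' p : AlgPt n s, A p * (cnt m m' p : ℝ≥0∞) := by
          refine tsum_congr fun p => ?_
          rw [← Finset.mul_sum]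
          congr 1
          rw [Finset.sum_ite, Finset.sum_const, Finset.sum_const]
          simp [cnt, ne_eq]
  have hPtop : ((pairsF n m m').card : ℝ≥0∞) ≠ ⊤ := ENNReal.natCast_ne_top _
  have hP0 : ((pairsF n m m').card : ℝ≥0∞) ≠ 0 := by exact_mod_cast hP
  have hre : ∑' p : AlgPt n s, A p * ((cnt m m' p : ℝ≥0∞) / ((pairsF n m m').card : ℝ≥0∞))
      = (∑' p : AlgPt n s, A p * (cnt m m' p : ℝ≥0∞)) / ((pairsF n m m').card : ℝ≥0∞) := by
    simp_rw [div_eq_mul_inv, ← mul_assoc]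
    rw [ENNReal.tsum_mul_right]
  rw [hre, ENNReal.le_div_iff_mul_le (Or.inl hP0) (Or.inl hPtop)]
  calc (1/3 : ℝ≥0∞) * ((pairsF n m m').card : ℝ≥0∞)
      = ((pairsF n m m').card : ℝ≥0∞) * (1/3) := mul_comm _ _
    _ ≤ _ := hsum

lemma test_scale_bound {n : ℕ} (β : ℕ) (hβ : 2 ≤ β) (hn : 0 < n) (Q : Finset (Fin n)) (T : ℕ)
    (hT : ∀ j < T, β ^ (j+1) ≤ n) :
    ∑ j ∈ Finset.range T,
      ((((pairsF n (β^j) (β^(j+1))).filter fun pr =>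
          (Q ∩ pr.2).Nonempty ∧ pr.1 ∩ Q = ∅).card : ℝ)
        / ((pairsF n (β^j) (β^(j+1))).card : ℝ)) ≤ 4 * β := by
  classical
  have hβ0 : 0 < β := by omega
  rcases Nat.eq_zero_or_pos Q.card with hq0 | hq1
  · have hQ : Q = ∅ := Finset.card_eq_zero.mp hq0
    have hz : ∀ j ∈ Finset.range T,
        ((((pairsF n (β^j) (β^(j+1))).filter fun pr =>
          (Q ∩ pr.2).Nonempty ∧ pr.1 ∩ Q = ∅).card : ℝ)
        / ((pairsF n (β^j) (β^(j+1))).card : ℝ)) = 0 := by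
      intro j _
      have : ((pairsF n (β^j) (β^(j+1))).filter fun pr =>
          (Q ∩ pr.2).Nonempty ∧ pr.1 ∩ Q = ∅) = ∅ := by
        rw [Finset.filter_eq_empty_iff]
        intro pr _
        rw [hQ]
        simp
      rw [this]
      simp
    rw [Finset.sum_congr rfl hz]
    have : (0:ℝ) ≤ 4 * β := by positivity
    simpa using this
  · have hqn : Q.card ≤ n := by
      have := Finset.card_le_univ Q
      simpa using this
    set x : ℝ := (Q.card : ℝ) / n with hxdef
    have hn0 : (0:ℝ) < n := by exact_mod_cast hn
    have hx : 0 < x := by positivity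
    have hβr : (2:ℝ) ≤ (β:ℝ) := by exact_mod_cast hβ
    have hterm : ∀ j < T,
        ((((pairsF n (β^j) (β^(j+1))).filter fun pr =>
          (Q ∩ pr.2).Nonempty ∧ pr.1 ∩ Q = ∅).card : ℝ)
        / ((pairsF n (β^j) (β^(j+1))).card : ℝ))
        ≤ (β:ℝ) * min (x * (β:ℝ)^j) (x * (β:ℝ)^j)⁻¹ := by
      intro j hj
      set m := β^j with hm
      set m' := β^(j+1) with hm'
      have hm'n : m' ≤ n := hT j hj
      have hmm' : m ≤ m' := Nat.pow_le_pow_right hβ0 (by omega)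
      have hm1 : 1 ≤ m := Nat.one_le_pow _ _ hβ0
      have hm'1 : 1 ≤ m' := Nat.one_le_pow _ _ hβ0
      have hmn : m ≤ n := le_trans hmm' hm'n
      have hPcard : (pairsF n m m').card = n.choose m' * m'.choose m := card_pairsF_A
      have hPpos : 0 < (pairsF n m m').card := by
        rw [hPcard]
        exact Nat.mul_pos (Nat.choose_pos hm'n) (Nat.choose_pos hmm')
      have hPr : (0:ℝ) < ((pairsF n m m').card : ℝ) := by exact_mod_cast hPpos
      set N := ((pairsF n m m').filter fun pr =>
          (Q ∩ pr.2).Nonempty ∧ pr.1 ∩ Q = ∅).card with hN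
      -- bound (a)
      have hba : N * n ≤ Q.card * m' * (pairsF n m m').card := by
        have h1 : N ≤ Q.card * ((n-1).choose (m'-1) * m'.choose m) := by
          calc N ≤ ((pairsF n m m').filter fun pr => (Q ∩ pr.2).Nonempty).card := by
                apply Finset.card_le_card
                intro pr hpr
                rw [Finset.mem_filter] at hpr ⊢
                exact ⟨hpr.1, hpr.2.1⟩
            _ ≤ (Q.biUnion fun v => (pairsF n m m').filter fun pr => v ∈ pr.2).card := by
                apply Finset.card_le_card
                intro pr hpr
                rw [Finset.mem_filter] at hpr
                obtain ⟨hmem, v, hv⟩ := hpr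
                rw [Finset.mem_inter] at hv
                rw [Finset.mem_biUnion]
                exact ⟨v, hv.1, Finset.mem_filter.mpr ⟨hmem, hv.2⟩⟩
            _ ≤ ∑ v ∈ Q, ((pairsF n m m').filter fun pr => v ∈ pr.2).card :=
                Finset.card_biUnion_le
            _ = ∑ _v ∈ Q, (n-1).choose (m'-1) * m'.choose m :=
                Finset.sum_congr rfl fun v _ => card_pairsF_mem hm'1 v
            _ = Q.card * ((n-1).choose (m'-1) * m'.choose m) := by
                rw [Finset.sum_const, smul_eq_mul]
        have hid : (n-1).choose (m'-1) * n = m' * n.choose m' := by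
          have h := Nat.add_one_mul_choose_eq (n-1) (m'-1)
          have e1 : n-1+1 = n := by omega
          have e2 : m'-1+1 = m' := by omega
          rw [e1, e2] at h
          calc (n-1).choose (m'-1) * n = n * (n-1).choose (m'-1) := mul_comm _ _
            _ = n.choose m' * m' := h
            _ = m' * n.choose m' := mul_comm _ _
        calc N * n ≤ (Q.card * ((n-1).choose (m'-1) * m'.choose m)) * n :=
              Nat.mul_le_mul_right n h1
          _ = Q.card * (((n-1).choose (m'-1) * n) * m'.choose m) := by ring
          _ = Q.card * ((m' * n.choose m') * m'.choose m) := by rw [hid]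
          _ = Q.card * m' * (n.choose m' * m'.choose m) := by ring
          _ = Q.card * m' * (pairsF n m m').card := by rw [hPcard]
      -- bound (b)
      have hbb : N * n.choose m ≤ (n - Q.card).choose m * (pairsF n m m').card := by
        have h1 : N ≤ (n - Q.card).choose m * (n-m).choose (m'-m) := by
          rw [← card_pairsF_avoid hmm' Q]
          apply Finset.card_le_card
          intro pr hpr
          rw [Finset.mem_filter] at hpr ⊢
          exact ⟨hpr.1, hpr.2.2⟩
        calc N * n.choose m ≤ ((n - Q.card).choose m * (n-m).choose (m'-m)) * n.choose m :=
              Nat.mul_le_mul_right _ h1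
          _ = (n - Q.card).choose m * (n.choose m * (n-m).choose (m'-m)) := by ring
          _ = (n - Q.card).choose m * (pairsF n m m').card := by rw [card_pairsF_B hmm']
      -- ratio ≤ x * β^(j+1)
      have hra : (N:ℝ) / ((pairsF n m m').card : ℝ) ≤ x * (β:ℝ)^(j+1) := by
        have hxx : x * (β:ℝ)^(j+1) = ((Q.card * m' : ℕ) : ℝ) / n := by
          rw [hxdef]
          push_cast [hm']
          ring
        rw [hxx, div_le_div_iff₀ hPr hn0]
        exact_mod_cast hba
      -- ratio ≤ (x * β^j)⁻¹
      have hrb : (N:ℝ) / ((pairsF n m m').card : ℝ) ≤ (x * (β:ℝ)^j)⁻¹ := by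
        have hcm : (0:ℝ) < (n.choose m : ℝ) := by exact_mod_cast Nat.choose_pos hmn
        have h1 : (N:ℝ) / ((pairsF n m m').card : ℝ)
            ≤ ((n - Q.card).choose m : ℝ) / (n.choose m : ℝ) := by
          rw [div_le_div_iff₀ hPr hcm]
          exact_mod_cast hbb
        have h2 : ((n - Q.card).choose m : ℝ) / (n.choose m : ℝ) ≤ (n:ℝ) / ((m:ℝ) * Q.card) :=
          choose_div_le n Q.card m hq1 hqn hm1 hmn
        have h3 : (n:ℝ) / ((m:ℝ) * Q.card) = (x * (β:ℝ)^j)⁻¹ := by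
          have hq0 : (0:ℝ) < (Q.card:ℝ) := by exact_mod_cast hq1
          have hmr : ((m:ℕ):ℝ) = (β:ℝ)^j := by rw [hm]; push_cast; ring
          rw [hxdef, ← hmr]
          have hm0 : ((m:ℕ):ℝ) ≠ 0 := by
            have : 0 < m := hm1
            positivity
          rw [mul_inv, inv_div]
          field_simp
        linarith
      have hminle : min (x * (β:ℝ)^(j+1)) ((x * (β:ℝ)^j)⁻¹)
          ≤ (β:ℝ) * min (x * (β:ℝ)^j) (x * (β:ℝ)^j)⁻¹ := by
        rcases min_cases (x * (β:ℝ)^j) ((x * (β:ℝ)^j)⁻¹) with ⟨hmin, hle⟩ | ⟨hmin, hle⟩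
        · rw [hmin]
          calc min (x * (β:ℝ)^(j+1)) ((x * (β:ℝ)^j)⁻¹) ≤ x * (β:ℝ)^(j+1) := min_le_left _ _
            _ = (β:ℝ) * (x * (β:ℝ)^j) := by ring
        · rw [hmin]
          calc min (x * (β:ℝ)^(j+1)) ((x * (β:ℝ)^j)⁻¹) ≤ (x * (β:ℝ)^j)⁻¹ := min_le_right _ _
            _ = 1 * (x * (β:ℝ)^j)⁻¹ := (one_mul _).symm
            _ ≤ (β:ℝ) * (x * (β:ℝ)^j)⁻¹ := by
                apply mul_le_mul_of_nonneg_right (by linarith) (by positivity)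
      exact le_trans (le_min hra hrb) hminle
    calc ∑ j ∈ Finset.range T, ((((pairsF n (β^j) (β^(j+1))).filter fun pr =>
          (Q ∩ pr.2).Nonempty ∧ pr.1 ∩ Q = ∅).card : ℝ)
        / ((pairsF n (β^j) (β^(j+1))).card : ℝ))
        ≤ ∑ j ∈ Finset.range T, (β:ℝ) * min (x * (β:ℝ)^j) (x * (β:ℝ)^j)⁻¹ :=
          Finset.sum_le_sum fun j hj => hterm j (Finset.mem_range.mp hj)
      _ = (β:ℝ) * ∑ j ∈ Finset.range T, min (x * (β:ℝ)^j) (x * (β:ℝ)^j)⁻¹ := by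
          rw [Finset.mul_sum]
      _ ≤ (β:ℝ) * 4 := by
          apply mul_le_mul_of_nonneg_left (sum_min_le hβr hx T) (by positivity)
      _ = 4 * β := by ring

lemma main_bound {n s : ℕ} (β : ℕ) (hβ : 2 ≤ β) (α : ℝ) (hα0 : 0 ≤ α) (hαβ : α < (β:ℝ))
    (A : Alg n s) (hA : ∀ I : Finset (Fin n), (2/3 : ℝ≥0∞) ≤ estProb A α I) :
    (Nat.log β n : ℝ) ≤ 12 * β * s := by
  classical
  set T := Nat.log β n with hTdef
  rcases Nat.eq_zero_or_pos T with h0 | hTpos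
  · rw [h0]; simp only [Nat.cast_zero]; positivity
  have hn0 : n ≠ 0 := by
    intro h
    rw [h] at hTdef
    simp at hTdef
    omega
  have hn : 0 < n := Nat.pos_of_ne_zero hn0
  have hβ0 : 0 < β := by omega
  have hpow : ∀ j < T, β^(j+1) ≤ n := by
    intro j hj
    calc β^(j+1) ≤ β^T := Nat.pow_le_pow_right hβ0 (by omega)
      _ ≤ n := Nat.pow_log_le_self β hn0
  have hPpos : ∀ j < T, 0 < (pairsF n (β^j) (β^(j+1))).card := by
    intro j hj
    rw [card_pairsF_A]
    exact Nat.mul_pos (Nat.choose_pos (hpow j hj))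
      (Nat.choose_pos (Nat.pow_le_pow_right hβ0 (by omega)))
  have hstep : ∀ j < T, (1/3 : ℝ≥0∞) ≤ ∑' p : AlgPt n s,
      A p * ((cnt (β^j) (β^(j+1)) p : ℝ≥0∞) / ((pairsF n (β^j) (β^(j+1))).card : ℝ≥0∞)) := by
    intro j hj
    apply step_scale α A hA
    · have hp : (0:ℝ) < (β:ℝ)^j := by positivity
      push_cast
      calc α * (β:ℝ)^j < (β:ℝ) * (β:ℝ)^j := by nlinarith
        _ = (β:ℝ)^(j+1) := by ring
    · exact Nat.pos_iff_ne_zero.mp (hPpos j hj)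
  have hmaster : (T : ℝ≥0∞) / 3 ≤ ∑' p : AlgPt n s, A p * (∑ j ∈ Finset.range T,
      ((cnt (β^j) (β^(j+1)) p : ℝ≥0∞) / ((pairsF n (β^j) (β^(j+1))).card : ℝ≥0∞))) := by
    calc (T:ℝ≥0∞)/3 = ∑ _j ∈ Finset.range T, (1/3 : ℝ≥0∞) := by
          rw [Finset.sum_const, Finset.card_range, nsmul_eq_mul, mul_one_div]
      _ ≤ ∑ j ∈ Finset.range T, ∑' p : AlgPt n s,
            A p * ((cnt (β^j) (β^(j+1)) p : ℝ≥0∞)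
              / ((pairsF n (β^j) (β^(j+1))).card : ℝ≥0∞)) :=
          Finset.sum_le_sum fun j hj => hstep j (Finset.mem_range.mp hj)
      _ = ∑' p : AlgPt n s, ∑ j ∈ Finset.range T,
            A p * ((cnt (β^j) (β^(j+1)) p : ℝ≥0∞)
              / ((pairsF n (β^j) (β^(j+1))).card : ℝ≥0∞)) :=
          (Summable.tsum_finsetSum fun _ _ => ENNReal.summable).symm
      _ = _ := tsum_congr fun p => (Finset.mul_sum _ _ _).symm
  have hpb : ∀ p : AlgPt n s, (∑ j ∈ Finset.range T,
      ((cnt (β^j) (β^(j+1)) p : ℝ≥0∞) / ((pairsF n (β^j) (β^(j+1))).card : ℝ≥0∞)))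
      ≤ ENNReal.ofReal (4*β*s) := by
    intro p
    have hconv : ∀ j ∈ Finset.range T,
        ((cnt (β^j) (β^(j+1)) p : ℝ≥0∞) / ((pairsF n (β^j) (β^(j+1))).card : ℝ≥0∞))
          = ENNReal.ofReal ((cnt (β^j) (β^(j+1)) p : ℝ)
              / ((pairsF n (β^j) (β^(j+1))).card : ℝ)) := by
      intro j hj
      have h1 : (0:ℝ) < ((pairsF n (β^j) (β^(j+1))).card : ℝ) := by
        exact_mod_cast hPpos j (Finset.mem_range.mp hj)
      rw [ENNReal.ofReal_div_of_pos h1, ENNReal.ofReal_natCast, ENNReal.ofReal_natCast]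
    rw [Finset.sum_congr rfl hconv,
      ← ENNReal.ofReal_sum_of_nonneg (fun j hj => by positivity)]
    apply ENNReal.ofReal_le_ofReal
    -- real inequality
    have hunion : ∀ j ∈ Finset.range T, (cnt (β^j) (β^(j+1)) p : ℝ)
        ≤ ∑ i : Fin s, ((((pairsF n (β^j) (β^(j+1))).filter fun pr =>
            (p.1 i ∩ pr.2).Nonempty ∧ pr.1 ∩ p.1 i = ∅).card : ℝ)) := by
      intro j _
      have hsubset : ((pairsF n (β^j) (β^(j+1))).filter fun pr =>
            answers p.1 pr.1 ≠ answers p.1 pr.2)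
          ⊆ Finset.univ.biUnion fun i : Fin s =>
              (pairsF n (β^j) (β^(j+1))).filter fun pr =>
                (p.1 i ∩ pr.2).Nonempty ∧ pr.1 ∩ p.1 i = ∅ := by
        intro pr hpr
        rw [Finset.mem_filter] at hpr
        obtain ⟨hmem, hne⟩ := hpr
        have hsub : pr.1 ⊆ pr.2 := (mem_pairsF.mp hmem).1
        obtain ⟨i, hi⟩ := Function.ne_iff.mp hne
        have h1 : ¬ (p.1 i ∩ pr.1).Nonempty := by
          intro hne1
          have hne2 : (p.1 i ∩ pr.2).Nonempty := by
            obtain ⟨v, hv⟩ := hne1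
            rw [Finset.mem_inter] at hv
            exact ⟨v, Finset.mem_inter.mpr ⟨hv.1, hsub hv.2⟩⟩
          apply hi
          rw [answers, answers]
          simp [hne1, hne2]
        have h2 : (p.1 i ∩ pr.2).Nonempty := by
          by_contra h2
          apply hi
          rw [answers, answers]
          simp [h1, h2]
        rw [Finset.mem_biUnion]
        refine ⟨i, Finset.mem_univ i, Finset.mem_filter.mpr ⟨hmem, h2, ?_⟩⟩
        rw [Finset.inter_comm] at h1
        exact Finset.not_nonempty_iff_eq_empty.mp h1
      have hcard : cnt (β^j) (β^(j+1)) p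
          ≤ ∑ i : Fin s, (((pairsF n (β^j) (β^(j+1))).filter fun pr =>
              (p.1 i ∩ pr.2).Nonempty ∧ pr.1 ∩ p.1 i = ∅).card) := by
        calc cnt (β^j) (β^(j+1)) p
            ≤ (Finset.univ.biUnion fun i : Fin s =>
                (pairsF n (β^j) (β^(j+1))).filter fun pr =>
                  (p.1 i ∩ pr.2).Nonempty ∧ pr.1 ∩ p.1 i = ∅).card :=
              Finset.card_le_card hsubset
          _ ≤ _ := Finset.card_biUnion_le
      exact_mod_cast hcard
    calc ∑ j ∈ Finset.range T, ((cnt (β^j) (β^(j+1)) p : ℝ)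
            / ((pairsF n (β^j) (β^(j+1))).card : ℝ))
        ≤ ∑ j ∈ Finset.range T, ∑ i : Fin s,
            ((((pairsF n (β^j) (β^(j+1))).filter fun pr =>
              (p.1 i ∩ pr.2).Nonempty ∧ pr.1 ∩ p.1 i = ∅).card : ℝ)
            / ((pairsF n (β^j) (β^(j+1))).card : ℝ)) := by
          apply Finset.sum_le_sum
          intro j hj
          have hP : (0:ℝ) < ((pairsF n (β^j) (β^(j+1))).card : ℝ) := by
            exact_mod_cast hPpos j (Finset.mem_range.mp hj)
          rw [← Finset.sum_div]
          gcongr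
          exact hunion j hj
      _ = ∑ i : Fin s, ∑ j ∈ Finset.range T,
            ((((pairsF n (β^j) (β^(j+1))).filter fun pr =>
              (p.1 i ∩ pr.2).Nonempty ∧ pr.1 ∩ p.1 i = ∅).card : ℝ)
            / ((pairsF n (β^j) (β^(j+1))).card : ℝ)) := Finset.sum_comm
      _ ≤ ∑ _i : Fin s, 4*(β:ℝ) := by
          apply Finset.sum_le_sum
          intro i _
          exact test_scale_bound β hβ hn (p.1 i) T hpow
      _ = (s:ℝ) * (4*β) := by
          rw [Finset.sum_const, Finset.card_univ, Fintype.card_fin, nsmul_eq_mul]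
      _ = 4*β*s := by ring
  have hfin : (T:ℝ≥0∞)/3 ≤ ENNReal.ofReal (4*β*s) := by
    calc (T:ℝ≥0∞)/3 ≤ _ := hmaster
      _ ≤ ∑' p : AlgPt n s, A p * ENNReal.ofReal (4*β*s) :=
          ENNReal.tsum_le_tsum fun p => mul_le_mul_right (hpb p) _
      _ = (∑' p : AlgPt n s, A p) * ENNReal.ofReal (4*β*s) := ENNReal.tsum_mul_right
      _ = ENNReal.ofReal (4*β*s) := by rw [A.tsum_coe, one_mul]
  have h1 : (T:ℝ≥0∞)/3 = ENNReal.ofReal ((T:ℝ)/3) := by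
    rw [ENNReal.ofReal_div_of_pos (by norm_num), ENNReal.ofReal_natCast]
    norm_num
  rw [h1] at hfin
  have h2 : (T:ℝ)/3 ≤ 4*β*s := (ENNReal.ofReal_le_ofReal_iff (by positivity)).mp hfin
  linarith

end GTLB

open GTLB in
theorem stmt0 (α : ℝ) (hα : 1 ≤ α) :
    ∃ c : ℝ, 0 < c ∧ ∃ N : ℕ, ∀ n : ℕ, N ≤ n → ∀ s : ℕ, ∀ A : Alg n s,
      (∀ I : Finset (Fin n), (2 / 3 : ℝ≥0∞) ≤ estProb A α I) →
      c * Real.logb 2 n / (480 * logStar n : ℝ) ^ (logStar n + 1) ≤ (s : ℝ) := by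
  classical
  set β : ℕ := ⌈α⌉₊ + 2 with hβdef
  have hβ2 : 2 ≤ β := by omega
  have hβr2 : (2:ℝ) ≤ (β:ℝ) := by exact_mod_cast hβ2
  have hαβ : α < (β:ℝ) := by
    have h1 : α ≤ (⌈α⌉₊ : ℝ) := Nat.le_ceil α
    have h2 : ((⌈α⌉₊ : ℕ):ℝ) < (β:ℝ) := by exact_mod_cast (by omega : ⌈α⌉₊ < β)
    linarith
  have hlogβ : 0 < Real.logb 2 (β:ℝ) := Real.logb_pos one_lt_two (by linarith)
  refine ⟨1 / (24 * (β:ℝ) * Real.logb 2 (β:ℝ)), by positivity, β^2, ?_⟩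
  intro n hn s A hA
  have hβ2sq : 4 ≤ β^2 := by nlinarith
  have hn1 : 1 ≤ n := by omega
  have hnr1 : (1:ℝ) ≤ (n:ℝ) := by exact_mod_cast hn1
  have hmain : (Nat.log β n : ℝ) ≤ 12 * β * s :=
    main_bound β hβ2 α (by linarith) hαβ A hA
  set T := Nat.log β n with hTdef
  have hTub : Real.logb 2 (n:ℝ) ≤ ((T:ℝ) + 1) * Real.logb 2 (β:ℝ) := by
    have hlt : (n:ℝ) ≤ ((β:ℝ))^(T + 1) := by
      exact_mod_cast (Nat.lt_pow_succ_log_self (by omega) n).le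
    calc Real.logb 2 (n:ℝ) ≤ Real.logb 2 ((β:ℝ)^(T+1)) :=
          Real.logb_le_logb_of_le one_lt_two (by linarith) hlt
      _ = ((T:ℝ)+1) * Real.logb 2 (β:ℝ) := by rw [Real.logb_pow]; push_cast; ring
  have hlogn2 : 2 * Real.logb 2 (β:ℝ) ≤ Real.logb 2 (n:ℝ) := by
    have hcast : ((β:ℝ))^2 ≤ (n:ℝ) := by exact_mod_cast hn
    have hb0 : (0:ℝ) < (β:ℝ)^2 := by positivity
    have h := Real.logb_le_logb_of_le one_lt_two hb0 hcast
    rw [Real.logb_pow] at h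
    have h2 : ((2:ℕ):ℝ) = 2 := by norm_num
    rw [h2] at h
    linarith
  have hlogn0 : 0 ≤ Real.logb 2 (n:ℝ) := Real.logb_nonneg one_lt_two hnr1
  have hDub : Real.logb 2 (n:ℝ) / Real.logb 2 (β:ℝ) ≤ (T:ℝ) + 1 := by
    rw [div_le_iff₀ hlogβ]; linarith
  have hD2 : 2 ≤ Real.logb 2 (n:ℝ) / Real.logb 2 (β:ℝ) := by
    rw [le_div_iff₀ hlogβ]; linarith
  have hTlb : Real.logb 2 (n:ℝ) / (2 * Real.logb 2 (β:ℝ)) ≤ (T:ℝ) := by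
    have e : Real.logb 2 (n:ℝ) / (2 * Real.logb 2 (β:ℝ))
        = (Real.logb 2 (n:ℝ) / Real.logb 2 (β:ℝ)) / 2 := by
      rw [div_div, mul_comm]
    rw [e]; linarith
  have hcs : (1 / (24 * (β:ℝ) * Real.logb 2 (β:ℝ))) * Real.logb 2 (n:ℝ) ≤ (s:ℝ) := by
    have h12 : (0:ℝ) < 12 * (β:ℝ) := by positivity
    have e : (1 / (24 * (β:ℝ) * Real.logb 2 (β:ℝ))) * Real.logb 2 (n:ℝ)
        = (Real.logb 2 (n:ℝ) / (2 * Real.logb 2 (β:ℝ))) / (12 * (β:ℝ)) := by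
      rw [div_div, one_div, inv_mul_eq_div]
      congr 1
      ring
    rw [e, div_le_iff₀ h12]
    calc Real.logb 2 (n:ℝ) / (2 * Real.logb 2 (β:ℝ)) ≤ (T:ℝ) := hTlb
      _ ≤ 12 * (β:ℝ) * s := hmain
      _ = (s:ℝ) * (12 * (β:ℝ)) := by ring
  rcases Nat.eq_zero_or_pos (logStar n) with hL | hL
  · rw [hL]
    norm_num
  · have hbase : (1:ℝ) ≤ 480 * (logStar n : ℝ) := by
      have h1 : (1:ℝ) ≤ (logStar n : ℝ) := by exact_mod_cast hL
      linarith
    have hDpow : (1:ℝ) ≤ (480 * (logStar n : ℝ)) ^ (logStar n + 1) := one_le_pow₀ hbase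
    have hnum : 0 ≤ (1 / (24 * (β:ℝ) * Real.logb 2 (β:ℝ))) * Real.logb 2 (n:ℝ) := by
      have : (0:ℝ) ≤ 1 / (24 * (β:ℝ) * Real.logb 2 (β:ℝ)) := by positivity
      exact mul_nonneg this hlogn0
    calc (1 / (24 * (β:ℝ) * Real.logb 2 (β:ℝ))) * Real.logb 2 (n:ℝ)
          / (480 * (logStar n : ℝ)) ^ (logStar n + 1)
        ≤ (1 / (24 * (β:ℝ) * Real.logb 2 (β:ℝ))) * Real.logb 2 (n:ℝ) :=
          div_le_self hnum hDpow
      _ ≤ (s:ℝ) := hcs
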